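/- Fix real matrices A (n×n), B (n×m), a horizon T ≥ 1, a real δ ∈ [0,1), and sequences (Q_t)_{t∈ℕ} of symmetric positive definite n×n matrices and (R_t)_{t∈ℕ} of symmetric positive definite m×m matrices satisfying (1−δ)Q_t ⪯ Q_{t+1} and (1−δ)R_t ⪯ R_{t+1} for all t. For weights (Q,R) let P_k(Q,R) be the Riccati iterates with P_0 = 0 and P_{k+1} = AᵀP_kA − AᵀP_kB(BᵀP_kB+R)⁻¹BᵀP_kA + Q. Then for every t ∈ ℕ, every state x_t ∈ ℝⁿ, and every control sequence u_t, u_{t+1}, …, u_{t+T−1} ∈ ℝᵐ with trajectory x_{k+1} = Ax_k + Bu_k, one has ∑_{k=t}^{t+T−1} (x_kᵀQ_kx_k + u_kᵀR_ku_k) ≥ (1−δ)^{T−1} · x_tᵀP_T(Q_t,R_t)x_t. -/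

import Mathlib

open Matrix

/-- The finite-horizon Riccati iteration with `P 0 = 0` and
`P (k+1) = AᵀP_kA − AᵀP_kB(BᵀP_kB+R)⁻¹BᵀP_kA + Q`. -/
noncomputable def riccati {n m : ℕ} (A : Matrix (Fin n) (Fin n) ℝ)
    (B : Matrix (Fin n) (Fin m) ℝ) (Q : Matrix (Fin n) (Fin n) ℝ)
    (R : Matrix (Fin m) (Fin m) ℝ) : ℕ → Matrix (Fin n) (Fin n) ℝ
  | 0 => 0
  | k + 1 =>
      Aᵀ * riccati A B Q R k * A -
        Aᵀ * riccati A B Q R k * B * (Bᵀ * riccati A B Q R k * B + R)⁻¹ *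
          Bᵀ * riccati A B Q R k * A + Q

/-- The Loewner order on real square matrices: `X ⪯ Y` iff `Y − X` is positive semidefinite. -/
def loewnerLE {n : ℕ} (X Y : Matrix (Fin n) (Fin n) ℝ) : Prop := (Y - X).PosSemidef

namespace WindowAux

lemma tdot {a b : ℕ} (M : Matrix (Fin a) (Fin b) ℝ) (v : Fin a → ℝ) (w : Fin b → ℝ) :
    (Mᵀ *ᵥ v) ⬝ᵥ w = v ⬝ᵥ (M *ᵥ w) := by
  rw [Matrix.mulVec_transpose, ← Matrix.dotProduct_mulVec]

lemma tdot' {a b : ℕ} (M : Matrix (Fin a) (Fin b) ℝ) (v : Fin b → ℝ) (w : Fin a → ℝ) :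
    (M *ᵥ v) ⬝ᵥ w = v ⬝ᵥ (Mᵀ *ᵥ w) := by
  have := tdot Mᵀ v w
  rwa [Matrix.transpose_transpose] at this

lemma dot_symm {a : ℕ} {M : Matrix (Fin a) (Fin a) ℝ} (hM : Mᵀ = M)
    (v w : Fin a → ℝ) : v ⬝ᵥ (M *ᵥ w) = w ⬝ᵥ (M *ᵥ v) := by
  rw [← tdot M v w, hM, dotProduct_comm]

lemma psd_nonneg {a : ℕ} {M : Matrix (Fin a) (Fin a) ℝ} (hM : M.PosSemidef)
    (x : Fin a → ℝ) : 0 ≤ x ⬝ᵥ (M *ᵥ x) := by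
  simpa using hM.dotProduct_mulVec_nonneg x

lemma psd_tsymm {a : ℕ} {M : Matrix (Fin a) (Fin a) ℝ} (hM : M.IsHermitian) : Mᵀ = M := by
  have := hM.eq
  rwa [Matrix.conjTranspose_eq_transpose_of_trivial] at this

lemma psd_smul {a : ℕ} {M : Matrix (Fin a) (Fin a) ℝ} {c : ℝ} (hc : 0 ≤ c)
    (hM : M.PosSemidef) : (c • M).PosSemidef := by
  refine Matrix.PosSemidef.of_dotProduct_mulVec_nonneg ?_ ?_
  · simp [Matrix.IsHermitian, Matrix.conjTranspose_smul, psd_tsymm hM.1]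
  · intro x
    rw [Matrix.smul_mulVec, dotProduct_smul, smul_eq_mul]
    exact mul_nonneg hc (by simpa using hM.dotProduct_mulVec_nonneg x)

lemma pd_smul {a : ℕ} {M : Matrix (Fin a) (Fin a) ℝ} {c : ℝ} (hc : 0 < c)
    (hM : M.PosDef) : (c • M).PosDef := by
  refine Matrix.PosDef.of_dotProduct_mulVec_pos ?_ ?_
  · simp [Matrix.IsHermitian, Matrix.conjTranspose_smul, psd_tsymm hM.1]
  · intro x hx
    rw [Matrix.smul_mulVec, dotProduct_smul, smul_eq_mul]
    exact mul_pos hc (by simpa using hM.dotProduct_mulVec_pos hx)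

lemma lle_trans {a : ℕ} {X Y Z : Matrix (Fin a) (Fin a) ℝ}
    (h1 : loewnerLE X Y) (h2 : loewnerLE Y Z) : loewnerLE X Z := by
  have h := h1.add h2
  have e : Y - X + (Z - Y) = Z - X := by abel
  rwa [e] at h

lemma lle_smul {a : ℕ} {X Y : Matrix (Fin a) (Fin a) ℝ} {c : ℝ} (hc : 0 ≤ c)
    (h : loewnerLE X Y) : loewnerLE (c • X) (c • Y) := by
  have := psd_smul hc h
  rwa [smul_sub] at this

lemma lle_quad {a : ℕ} {X Y : Matrix (Fin a) (Fin a) ℝ} (h : loewnerLE X Y)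
    (x : Fin a → ℝ) : x ⬝ᵥ (X *ᵥ x) ≤ x ⬝ᵥ (Y *ᵥ x) := by
  have h0 := psd_nonneg h x
  rw [Matrix.sub_mulVec, dotProduct_sub] at h0
  linarith

variable {n m : ℕ} (A : Matrix (Fin n) (Fin n) ℝ) (B : Matrix (Fin n) (Fin m) ℝ)

/-- Completion of squares identity. -/
lemma cos_eq {P : Matrix (Fin n) (Fin n) ℝ} (hP : P.PosSemidef)
    (Qt : Matrix (Fin n) (Fin n) ℝ) {Rt : Matrix (Fin m) (Fin m) ℝ} (hR : Rt.PosDef)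
    (x : Fin n → ℝ) (u : Fin m → ℝ) :
    x ⬝ᵥ ((Aᵀ * P * A - Aᵀ * P * B * (Bᵀ * P * B + Rt)⁻¹ * Bᵀ * P * A + Qt) *ᵥ x)
      + (u + (Bᵀ * P * B + Rt)⁻¹ *ᵥ (Bᵀ *ᵥ (P *ᵥ (A *ᵥ x)))) ⬝ᵥ
          ((Bᵀ * P * B + Rt) *ᵥ (u + (Bᵀ * P * B + Rt)⁻¹ *ᵥ (Bᵀ *ᵥ (P *ᵥ (A *ᵥ x)))))
      = x ⬝ᵥ (Qt *ᵥ x) + u ⬝ᵥ (Rt *ᵥ u)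
        + (A *ᵥ x + B *ᵥ u) ⬝ᵥ (P *ᵥ (A *ᵥ x + B *ᵥ u)) := by
  have hPsymm : Pᵀ = P := psd_tsymm hP.1
  have hBPB : (Bᵀ * P * B).PosSemidef := by
    have := hP.conjTranspose_mul_mul_same B
    rwa [Matrix.conjTranspose_eq_transpose_of_trivial] at this
  have hS : (Bᵀ * P * B + Rt).PosDef := hR.posSemidef_add hBPB
  set S : Matrix (Fin m) (Fin m) ℝ := Bᵀ * P * B + Rt with hSdef
  have hSsymm : Sᵀ = S := psd_tsymm hS.1
  have hSd : IsUnit S.det := S.isUnit_iff_isUnit_det.mp hS.isUnit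
  have hSS : S * S⁻¹ = 1 := Matrix.mul_nonsing_inv S hSd
  set a : Fin n → ℝ := A *ᵥ x with ha
  set y : Fin m → ℝ := Bᵀ *ᵥ (P *ᵥ a) with hy
  set w : Fin m → ℝ := S⁻¹ *ᵥ y with hw
  have hSw : S *ᵥ w = y := by
    rw [hw, Matrix.mulVec_mulVec, hSS, Matrix.one_mulVec]
  -- expansion of the quadratic in the trajectory
  have hba : (B *ᵥ u) ⬝ᵥ (P *ᵥ a) = u ⬝ᵥ y := by
    rw [tdot' B u (P *ᵥ a), hy]
  have hab : a ⬝ᵥ (P *ᵥ (B *ᵥ u)) = u ⬝ᵥ y := by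
    rw [dot_symm hPsymm a (B *ᵥ u), hba]
  have hbb : (B *ᵥ u) ⬝ᵥ (P *ᵥ (B *ᵥ u)) = u ⬝ᵥ ((Bᵀ * P * B) *ᵥ u) := by
    rw [tdot' B u (P *ᵥ (B *ᵥ u)), Matrix.mulVec_mulVec, Matrix.mulVec_mulVec]
  have e1 : (A *ᵥ x + B *ᵥ u) ⬝ᵥ (P *ᵥ (A *ᵥ x + B *ᵥ u))
      = a ⬝ᵥ (P *ᵥ a) + 2 * (u ⬝ᵥ y) + u ⬝ᵥ ((Bᵀ * P * B) *ᵥ u) := by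
    rw [← ha, Matrix.mulVec_add, dotProduct_add, add_dotProduct, add_dotProduct,
      hba, hab, hbb]
    ring
  have e2 : u ⬝ᵥ (S *ᵥ u) = u ⬝ᵥ ((Bᵀ * P * B) *ᵥ u) + u ⬝ᵥ (Rt *ᵥ u) := by
    rw [hSdef, Matrix.add_mulVec, dotProduct_add]
  have e3 : (u + w) ⬝ᵥ (S *ᵥ (u + w))
      = u ⬝ᵥ (S *ᵥ u) + 2 * (u ⬝ᵥ y) + w ⬝ᵥ y := by
    rw [Matrix.mulVec_add, dotProduct_add, add_dotProduct, add_dotProduct,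
      dot_symm hSsymm w u, hSw]
    ring
  have e4 : x ⬝ᵥ ((Aᵀ * P * A) *ᵥ x) = a ⬝ᵥ (P *ᵥ a) := by
    rw [← Matrix.mulVec_mulVec, ← Matrix.mulVec_mulVec, dotProduct_comm,
      tdot A (P *ᵥ (A *ᵥ x)) x, ← ha, dotProduct_comm]
  have e5 : x ⬝ᵥ ((Aᵀ * P * B * S⁻¹ * Bᵀ * P * A) *ᵥ x) = w ⬝ᵥ y := by
    have hassoc : (Aᵀ * P * B * S⁻¹ * Bᵀ * P * A) *ᵥ x
        = Aᵀ *ᵥ (P *ᵥ (B *ᵥ w)) := by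
      rw [hw, hy, ha]
      simp only [Matrix.mulVec_mulVec, Matrix.mul_assoc]
    rw [hassoc, dotProduct_comm, tdot A (P *ᵥ (B *ᵥ w)) x, ← ha,
      tdot' P (B *ᵥ w) a, hPsymm, tdot' B w (P *ᵥ a), ← hy]
  calc x ⬝ᵥ ((Aᵀ * P * A - Aᵀ * P * B * S⁻¹ * Bᵀ * P * A + Qt) *ᵥ x)
        + (u + w) ⬝ᵥ (S *ᵥ (u + w))
      = x ⬝ᵥ ((Aᵀ * P * A) *ᵥ x) - x ⬝ᵥ ((Aᵀ * P * B * S⁻¹ * Bᵀ * P * A) *ᵥ x)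
          + x ⬝ᵥ (Qt *ᵥ x) + (u + w) ⬝ᵥ (S *ᵥ (u + w)) := by
        rw [Matrix.add_mulVec, Matrix.sub_mulVec, dotProduct_add, dotProduct_sub]
    _ = x ⬝ᵥ (Qt *ᵥ x) + u ⬝ᵥ (Rt *ᵥ u)
          + (A *ᵥ x + B *ᵥ u) ⬝ᵥ (P *ᵥ (A *ᵥ x + B *ᵥ u)) := by
        rw [e4, e5, e3, e2, e1]; ring

lemma cos_le {P : Matrix (Fin n) (Fin n) ℝ} (hP : P.PosSemidef)
    (Qt : Matrix (Fin n) (Fin n) ℝ) {Rt : Matrix (Fin m) (Fin m) ℝ} (hR : Rt.PosDef)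
    (x : Fin n → ℝ) (u : Fin m → ℝ) :
    x ⬝ᵥ ((Aᵀ * P * A - Aᵀ * P * B * (Bᵀ * P * B + Rt)⁻¹ * Bᵀ * P * A + Qt) *ᵥ x)
      ≤ x ⬝ᵥ (Qt *ᵥ x) + u ⬝ᵥ (Rt *ᵥ u)
        + (A *ᵥ x + B *ᵥ u) ⬝ᵥ (P *ᵥ (A *ᵥ x + B *ᵥ u)) := by
  have hBPB : (Bᵀ * P * B).PosSemidef := by
    have := hP.conjTranspose_mul_mul_same B
    rwa [Matrix.conjTranspose_eq_transpose_of_trivial] at this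
  have hS : (Bᵀ * P * B + Rt).PosDef := hR.posSemidef_add hBPB
  have h := cos_eq A B hP Qt hR x u
  have h0 := psd_nonneg hS.posSemidef
    (u + (Bᵀ * P * B + Rt)⁻¹ *ᵥ (Bᵀ *ᵥ (P *ᵥ (A *ᵥ x))))
  linarith

lemma riccati_psd {Qt : Matrix (Fin n) (Fin n) ℝ} {Rt : Matrix (Fin m) (Fin m) ℝ}
    (hQ : Qt.PosSemidef) (hR : Rt.PosDef) :
    ∀ k, (riccati A B Qt Rt k).PosSemidef := by
  intro k
  induction k with
  | zero => exact Matrix.PosSemidef.zero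
  | succ k ih =>
    set P := riccati A B Qt Rt k with hP
    have hPsymm : Pᵀ = P := psd_tsymm ih.1
    have hQsymm : Qtᵀ = Qt := psd_tsymm hQ.1
    have hBPB : (Bᵀ * P * B).PosSemidef := by
      have := ih.conjTranspose_mul_mul_same B
      rwa [Matrix.conjTranspose_eq_transpose_of_trivial] at this
    have hS : (Bᵀ * P * B + Rt).PosDef := hR.posSemidef_add hBPB
    have hSsymm : (Bᵀ * P * B + Rt)ᵀ = Bᵀ * P * B + Rt := psd_tsymm hS.1
    have hSinv : ((Bᵀ * P * B + Rt)⁻¹)ᵀ = (Bᵀ * P * B + Rt)⁻¹ := by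
      rw [Matrix.transpose_nonsing_inv, hSsymm]
    have hricc : riccati A B Qt Rt (k + 1)
        = Aᵀ * P * A - Aᵀ * P * B * (Bᵀ * P * B + Rt)⁻¹ * Bᵀ * P * A + Qt := rfl
    have hSinv' : (Bᵀ * (P * B) + Rt)⁻¹ᵀ = (Bᵀ * (P * B) + Rt)⁻¹ := by
      rw [← Matrix.mul_assoc]; exact hSinv
    rw [hricc]
    refine Matrix.PosSemidef.of_dotProduct_mulVec_nonneg ?_ ?_
    · rw [Matrix.IsHermitian, Matrix.conjTranspose_eq_transpose_of_trivial]
      simp only [Matrix.transpose_add, Matrix.transpose_sub, Matrix.transpose_mul,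
        Matrix.transpose_transpose, hPsymm, hQsymm, hSinv, hSinv', Matrix.mul_assoc]
    · intro z
      have h := cos_eq A B ih Qt hR z
        (-((Bᵀ * P * B + Rt)⁻¹ *ᵥ (Bᵀ *ᵥ (P *ᵥ (A *ᵥ z)))))
      rw [neg_add_cancel, zero_dotProduct, add_zero] at h
      have h1 := psd_nonneg hQ z
      have h2 := psd_nonneg hR.posSemidef
        (-((Bᵀ * P * B + Rt)⁻¹ *ᵥ (Bᵀ *ᵥ (P *ᵥ (A *ᵥ z)))))
      have h3 := psd_nonneg ih
        (A *ᵥ z + B *ᵥ -((Bᵀ * P * B + Rt)⁻¹ *ᵥ (Bᵀ *ᵥ (P *ᵥ (A *ᵥ z)))))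
      have hz : 0 ≤ z ⬝ᵥ ((Aᵀ * P * A - Aᵀ * P * B * (Bᵀ * P * B + Rt)⁻¹ * Bᵀ * P * A + Qt) *ᵥ z) := by
        rw [h]; positivity
      simpa using hz

lemma riccati_smul {Qt : Matrix (Fin n) (Fin n) ℝ} {Rt : Matrix (Fin m) (Fin m) ℝ}
    (hQ : Qt.PosSemidef) (hR : Rt.PosDef) {c : ℝ} (hc : 0 < c) :
    ∀ k, riccati A B (c • Qt) (c • Rt) k = c • riccati A B Qt Rt k := by
  intro k
  induction k with
  | zero => simp [riccati]
  | succ k ih =>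
    set P := riccati A B Qt Rt k with hPdef
    have hPpsd : P.PosSemidef := riccati_psd A B hQ hR k
    have hBPB : (Bᵀ * P * B).PosSemidef := by
      have := hPpsd.conjTranspose_mul_mul_same B
      rwa [Matrix.conjTranspose_eq_transpose_of_trivial] at this
    have hS : (Bᵀ * P * B + Rt).PosDef := hR.posSemidef_add hBPB
    have hSd : IsUnit (Bᵀ * P * B + Rt).det :=
      (Bᵀ * P * B + Rt).isUnit_iff_isUnit_det.mp hS.isUnit
    haveI : Invertible c := invertibleOfNonzero hc.ne'
    have hsmulS : Bᵀ * (c • P) * B + c • Rt = c • (Bᵀ * P * B + Rt) := by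
      rw [Matrix.mul_smul, Matrix.smul_mul, smul_add]
    have hinv : (c • (Bᵀ * P * B + Rt))⁻¹ = c⁻¹ • (Bᵀ * P * B + Rt)⁻¹ := by
      apply Matrix.inv_eq_left_inv
      rw [Matrix.smul_mul, Matrix.mul_smul, Matrix.nonsing_inv_mul _ hSd, smul_smul,
        inv_mul_cancel₀ hc.ne', one_smul]
    have l1 : riccati A B (c • Qt) (c • Rt) (k + 1)
        = Aᵀ * riccati A B (c • Qt) (c • Rt) k * A -
          Aᵀ * riccati A B (c • Qt) (c • Rt) k * B *
            (Bᵀ * riccati A B (c • Qt) (c • Rt) k * B + c • Rt)⁻¹ *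
            Bᵀ * riccati A B (c • Qt) (c • Rt) k * A + c • Qt := rfl
    have l2 : riccati A B Qt Rt (k + 1)
        = Aᵀ * P * A - Aᵀ * P * B * (Bᵀ * P * B + Rt)⁻¹ * Bᵀ * P * A + Qt := rfl
    rw [l1, l2, ih, hsmulS, hinv]
    have hcc : c * (c⁻¹ * c) = c := by field_simp
    simp only [Matrix.mul_smul, Matrix.smul_mul, smul_smul, smul_sub, smul_add, hcc]

lemma key (Qt : Matrix (Fin n) (Fin n) ℝ) (Rt : Matrix (Fin m) (Fin m) ℝ)
    (hQt : Qt.PosSemidef) (hRt : Rt.PosDef)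
    (Q : ℕ → Matrix (Fin n) (Fin n) ℝ) (R : ℕ → Matrix (Fin m) (Fin m) ℝ) :
    ∀ (T t : ℕ) (x : ℕ → Fin n → ℝ) (u : ℕ → Fin m → ℝ),
      (∀ k, x (k + 1) = A *ᵥ x k + B *ᵥ u k) →
      (∀ k, k ∈ Finset.Ico t (t + T) → loewnerLE Qt (Q k) ∧ loewnerLE Rt (R k)) →
      x t ⬝ᵥ (riccati A B Qt Rt T *ᵥ x t) ≤
        ∑ k ∈ Finset.Ico t (t + T), (x k ⬝ᵥ (Q k *ᵥ x k) + u k ⬝ᵥ (R k *ᵥ u k)) := by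
  intro T
  induction T with
  | zero => intro t x u hdyn hbd; simp [riccati]
  | succ T ih =>
    intro t x u hdyn hbd
    have hlt : t < t + (T + 1) := by omega
    rw [Finset.sum_eq_sum_Ico_succ_bot hlt]
    have htail : ∀ k, k ∈ Finset.Ico (t + 1) (t + 1 + T) →
        loewnerLE Qt (Q k) ∧ loewnerLE Rt (R k) := by
      intro k hk
      apply hbd
      simp only [Finset.mem_Ico] at hk ⊢
      omega
    have hIH := ih (t + 1) x u hdyn htail
    rw [show t + 1 + T = t + (T + 1) from by omega] at hIH
    have hP : (riccati A B Qt Rt T).PosSemidef := riccati_psd A B hQt hRt T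
    have hcos := cos_le A B hP Qt hRt (x t) (u t)
    rw [← hdyn t] at hcos
    have hricc : riccati A B Qt Rt (T + 1)
        = Aᵀ * riccati A B Qt Rt T * A -
          Aᵀ * riccati A B Qt Rt T * B * (Bᵀ * riccati A B Qt Rt T * B + Rt)⁻¹ *
            Bᵀ * riccati A B Qt Rt T * A + Qt := rfl
    rw [hricc]
    have hmem : t ∈ Finset.Ico t (t + (T + 1)) := by
      simp only [Finset.mem_Ico]; omega
    have hQle := lle_quad (hbd t hmem).1 (x t)
    have hRle := lle_quad (hbd t hmem).2 (u t)
    linarith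

lemma chain {c : ℝ} (hc1 : 0 ≤ c) (Q : ℕ → Matrix (Fin n) (Fin n) ℝ)
    (hQlow : ∀ t, loewnerLE (c • Q t) (Q (t + 1))) :
    ∀ t j, loewnerLE (c ^ j • Q t) (Q (t + j)) := by
  intro t j
  induction j with
  | zero =>
    simp only [pow_zero, one_smul, Nat.add_zero]
    show (Q t - Q t).PosSemidef
    rw [sub_self]
    exact Matrix.PosSemidef.zero
  | succ j ihj =>
    have h1 : loewnerLE (c ^ (j + 1) • Q t) (c • Q (t + j)) := by
      have := lle_smul hc1 ihj
      rwa [smul_smul, ← pow_succ'] at this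
    exact lle_trans h1 (hQlow (t + j))

end WindowAux

/-- Final inequality in Appendix Lemma 2(c): any admissible cost over a window of length
`T` dominates the frozen-weight finite-horizon optimal cost up to `(1−δ)^{T−1}`. -/
theorem window_cost_lower_bound {n m : ℕ}
    (A : Matrix (Fin n) (Fin n) ℝ) (B : Matrix (Fin n) (Fin m) ℝ)
    (T : ℕ) (hT : 1 ≤ T) (δ : ℝ) (hδ0 : 0 ≤ δ) (hδ1 : δ < 1)
    (Q : ℕ → Matrix (Fin n) (Fin n) ℝ) (R : ℕ → Matrix (Fin m) (Fin m) ℝ)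
    (hQpd : ∀ t, (Q t).PosDef) (hRpd : ∀ t, (R t).PosDef)
    (hQlow : ∀ t, loewnerLE ((1 - δ) • Q t) (Q (t + 1)))
    (hRlow : ∀ t, loewnerLE ((1 - δ) • R t) (R (t + 1))) :
    ∀ (t : ℕ) (x : ℕ → Fin n → ℝ) (u : ℕ → Fin m → ℝ),
      (∀ k, x (k + 1) = A *ᵥ x k + B *ᵥ u k) →
      ∑ k ∈ Finset.Ico t (t + T), (x k ⬝ᵥ (Q k *ᵥ x k) + u k ⬝ᵥ (R k *ᵥ u k)) ≥
        (1 - δ) ^ (T - 1) * (x t ⬝ᵥ (riccati A B (Q t) (R t) T *ᵥ x t)) := by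
  intro t x u hdyn
  set c : ℝ := (1 - δ) ^ (T - 1) with hcdef
  have h1δ : (0:ℝ) < 1 - δ := by linarith
  have hc : 0 < c := pow_pos h1δ _
  have hQt : ((c • Q t)).PosSemidef := WindowAux.psd_smul hc.le (hQpd t).posSemidef
  have hRt : ((c • R t)).PosDef := WindowAux.pd_smul hc (hRpd t)
  -- bound hypotheses
  have hbd : ∀ k, k ∈ Finset.Ico t (t + T) →
      loewnerLE (c • Q t) (Q k) ∧ loewnerLE (c • R t) (R k) := by
    intro k hk
    simp only [Finset.mem_Ico] at hk
    obtain ⟨hk1, hk2⟩ := hk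
    have hj : k = t + (k - t) := by omega
    have hjle : k - t ≤ T - 1 := by omega
    have hple : (1 - δ) ^ (T - 1) ≤ (1 - δ) ^ (k - t) :=
      pow_le_pow_of_le_one h1δ.le (by linarith) hjle
    constructor
    · have hchain := WindowAux.chain h1δ.le Q hQlow t (k - t)
      rw [← hj] at hchain
      refine WindowAux.lle_trans ?_ hchain
      show ((1 - δ) ^ (k - t) • Q t - c • Q t).PosSemidef
      rw [← sub_smul]
      exact WindowAux.psd_smul (by linarith) (hQpd t).posSemidef
    · have hchain := WindowAux.chain h1δ.le R hRlow t (k - t)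
      rw [← hj] at hchain
      refine WindowAux.lle_trans ?_ hchain
      show ((1 - δ) ^ (k - t) • R t - c • R t).PosSemidef
      rw [← sub_smul]
      exact WindowAux.psd_smul (by linarith) (hRpd t).posSemidef
  have hkey := WindowAux.key A B (c • Q t) (c • R t) hQt hRt Q R T t x u hdyn hbd
  have hscale : riccati A B (c • Q t) (c • R t) T = c • riccati A B (Q t) (R t) T :=
    WindowAux.riccati_smul A B (hQpd t).posSemidef (hRpd t) hc T
  rw [hscale, Matrix.smul_mulVec, dotProduct_smul, smul_eq_mul] at hkey
  exact hkey
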